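/- Let k ≥ 1, let a : Fin (2k) → ℕ with a i > 0 for all i, and let m : ℕ satisfy ∏_i a i = m². In the field RatFunc ℚ, let ι = Fin (2k) ⊕ Fin 2 and define v : ι → RatFunc ℚ by v (inl i) = (a i) · X, v (inr 0) = X^{4k}, and v (inr 1) = X^{2k}. Then the following are equivalent: (1) there exist a finite partition π of ι into nonempty blocks, for each block B a nonempty numerator set N(B) ⊆ B, and signs ε : blocks of π → ℤ, each ε B equal to 1 or −1 with ε B₀ = 1 for at least one block B₀, such that ∑_{B ∈ π} ε B · ((∏_{j ∈ N(B)} v j) / (∏_{j ∈ B \ N(B)} v j)) = m · X^{5k} − m · X^{3k}; (2) there exists S : Finset (Fin (2k)) with S.card = k and ∏_{i ∈ S} a i = m. -/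

import Mathlib

open Finset

lemma prod_sum_split {n : ℕ} {M : Type*} [CommMonoid M] (T : Finset (Fin n ⊕ Fin 2))
    (f : Fin n ⊕ Fin 2 → M) :
    ∏ j ∈ T, f j = (∏ i ∈ univ.filter (fun i => Sum.inl i ∈ T), f (Sum.inl i)) *
      ((if Sum.inr 0 ∈ T then f (Sum.inr 0) else 1) *
        (if Sum.inr 1 ∈ T then f (Sum.inr 1) else 1)) := by
  have : T = univ.filter (fun j => j ∈ T) := by simp
  rw [this, Finset.prod_filter, Fintype.prod_sum_type, Finset.prod_filter, Fin.prod_univ_two]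
  simp

lemma sum_sum_split {n : ℕ} {M : Type*} [AddCommMonoid M] (T : Finset (Fin n ⊕ Fin 2))
    (f : Fin n ⊕ Fin 2 → M) :
    ∑ j ∈ T, f j = (∑ i ∈ univ.filter (fun i => Sum.inl i ∈ T), f (Sum.inl i)) +
      ((if Sum.inr 0 ∈ T then f (Sum.inr 0) else 0) +
        (if Sum.inr 1 ∈ T then f (Sum.inr 1) else 0)) := by
  have : T = univ.filter (fun j => j ∈ T) := by simp
  rw [this, Finset.sum_filter, Fintype.sum_sum_type, Finset.sum_filter, Fin.sum_univ_two]
  simp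

lemma ratFunc_coe_C (c : ℚ) :
    ((RatFunc.C c : RatFunc ℚ) : LaurentSeries ℚ) = HahnSeries.C c := by
  rw [← RatFunc.algebraMap_C, ← IsScalarTower.algebraMap_apply]
  simp

lemma coe_C_mul_X_pow (c : ℚ) (n : ℕ) :
    ((RatFunc.C c * RatFunc.X ^ n : RatFunc ℚ) : LaurentSeries ℚ) =
      HahnSeries.single (n : ℤ) c := by
  rw [map_mul, map_pow, ratFunc_coe_C, RatFunc.coe_X, HahnSeries.single_pow]
  rw [HahnSeries.C_apply, HahnSeries.single_mul_single]
  simp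

lemma single_div {c r : ℚ} (hr : r ≠ 0) (α β : ℤ) :
    (HahnSeries.single α c : LaurentSeries ℚ) / HahnSeries.single β r =
      HahnSeries.single (α - β) (c / r) := by
  rw [div_eq_iff (HahnSeries.single_ne_zero hr), HahnSeries.single_mul_single]
  rw [sub_add_cancel, div_mul_cancel₀ _ hr]

theorem stmt_10 (k : ℕ) (hk : 1 ≤ k) (a : Fin (2 * k) → ℕ) (ha : ∀ i, 0 < a i)
    (m : ℕ) (hm : ∏ i, a i = m ^ 2)
    (v : Fin (2 * k) ⊕ Fin 2 → RatFunc ℚ)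
    (hv1 : ∀ i, v (Sum.inl i) = (a i : RatFunc ℚ) * RatFunc.X)
    (hv2 : v (Sum.inr 0) = RatFunc.X ^ (4 * k))
    (hv3 : v (Sum.inr 1) = RatFunc.X ^ (2 * k)) :
    (∃ π : Finpartition (Finset.univ : Finset (Fin (2 * k) ⊕ Fin 2)),
      ∃ N : Finset (Fin (2 * k) ⊕ Fin 2) → Finset (Fin (2 * k) ⊕ Fin 2),
      ∃ ε : Finset (Fin (2 * k) ⊕ Fin 2) → ℤ,
        (∀ B ∈ π.parts, (N B).Nonempty ∧ N B ⊆ B) ∧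
        (∀ B ∈ π.parts, ε B = 1 ∨ ε B = -1) ∧ (∃ B₀ ∈ π.parts, ε B₀ = 1) ∧
        ∑ B ∈ π.parts,
            (ε B : RatFunc ℚ) * ((∏ j ∈ N B, v j) / ∏ j ∈ B \ N B, v j)
          = (m : RatFunc ℚ) * RatFunc.X ^ (5 * k)
            - (m : RatFunc ℚ) * RatFunc.X ^ (3 * k)) ↔
    (∃ S : Finset (Fin (2 * k)), S.card = k ∧ ∏ i ∈ S, a i = m) := by
  constructor
  · rintro ⟨π, N, ε, hN, hε, -, hsum⟩
    have hm0 : 0 < m := by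
      rcases Nat.eq_zero_or_pos m with h | h
      · exfalso
        have : 0 < ∏ i, a i := Finset.prod_pos (fun i _ => ha i)
        rw [hm, h] at this; simp at this
      · exact h
    set c : Fin (2 * k) ⊕ Fin 2 → ℕ := Sum.elim a (fun _ => 1) with hc
    set d : Fin (2 * k) ⊕ Fin 2 → ℕ :=
      Sum.elim (fun _ => 1) (fun j => if j = 0 then 4 * k else 2 * k) with hd
    have hvj : ∀ j, v j = RatFunc.C ((c j : ℕ) : ℚ) * RatFunc.X ^ (d j) := by
      rintro (i | j)
      · rw [hv1]
        simp only [hc, hd, Sum.elim_inl, pow_one, map_natCast]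
      · fin_cases j
        · show v (Sum.inr 0) = RatFunc.C ((c (Sum.inr 0) : ℕ) : ℚ) * RatFunc.X ^ (d (Sum.inr 0))
          rw [hv2]; simp [hc, hd]
        · show v (Sum.inr 1) = RatFunc.C ((c (Sum.inr 1) : ℕ) : ℚ) * RatFunc.X ^ (d (Sum.inr 1))
          rw [hv3]
          have : d (Sum.inr 1) = 2 * k := by
            simp only [hd, Sum.elim_inr]
            rw [if_neg]
            simp [Fin.ext_iff]
          rw [this]
          simp [hc]
    -- abbreviations
    set SS : Finset (Fin (2 * k) ⊕ Fin 2) → Finset (Fin (2 * k)) :=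
      fun T => univ.filter (fun i => Sum.inl i ∈ T) with hSS
    set P : Finset (Fin (2 * k) ⊕ Fin 2) → ℕ := fun T => ∏ i ∈ SS T, a i with hP
    set D : Finset (Fin (2 * k) ⊕ Fin 2) → ℕ := fun T => ∑ j ∈ T, d j with hDdef
    have hPpos : ∀ T, 0 < P T := fun T => Finset.prod_pos (fun i _ => ha i)
    have hcprod : ∀ T, ∏ j ∈ T, c j = P T := by
      intro T
      rw [prod_sum_split T c]
      simp [hc, hP]
      rfl
    have hProd : ∀ T, ∏ j ∈ T, v j = RatFunc.C ((P T : ℕ) : ℚ) * RatFunc.X ^ (D T) := by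
      intro T
      simp only [hvj]
      rw [Finset.prod_mul_distrib, ← map_prod, Finset.prod_pow_eq_pow_sum, ← Nat.cast_prod,
        hcprod]
    have hD : ∀ T, D T = (SS T).card + (if Sum.inr 0 ∈ T then 4 * k else 0)
        + (if Sum.inr 1 ∈ T then 2 * k else 0) := by
      intro T
      rw [hDdef]
      simp only
      rw [sum_sum_split T d]
      simp only [hd, hSS, Sum.elim_inl, Sum.elim_inr, Finset.sum_const, smul_eq_mul, mul_one]
      norm_num [Fin.ext_iff]
      split_ifs <;> omega
    have hSSle : ∀ T, (SS T).card ≤ 2 * k := by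
      intro T
      calc (SS T).card ≤ (univ : Finset (Fin (2*k))).card := Finset.card_filter_le _ _
      _ = 2 * k := by simp
    set e : Finset (Fin (2 * k) ⊕ Fin 2) → ℤ :=
      fun B => (D (N B) : ℤ) - (D (B \ N B) : ℤ) with he
    set q : Finset (Fin (2 * k) ⊕ Fin 2) → ℚ :=
      fun B => (ε B : ℚ) * ((P (N B) : ℚ) / (P (B \ N B) : ℚ)) with hq
    -- coefficient equation
    have hterm : ∀ B, (((ε B : RatFunc ℚ) * ((∏ j ∈ N B, v j) / ∏ j ∈ B \ N B, v j) :
        RatFunc ℚ) : LaurentSeries ℚ) = HahnSeries.single (e B) (q B) := by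
      intro B
      have hεC : ((ε B : ℤ) : RatFunc ℚ) = RatFunc.C ((ε B : ℤ) : ℚ) :=
        (map_intCast (RatFunc.C : ℚ →+* RatFunc ℚ) (ε B)).symm
      rw [hProd, hProd, hεC, map_mul, map_div₀, coe_C_mul_X_pow, coe_C_mul_X_pow,
        single_div (by exact_mod_cast (hPpos (B \ N B)).ne') _ _, ratFunc_coe_C,
        HahnSeries.C_apply, HahnSeries.single_mul_single, zero_add]
    have hRHS : (((m : RatFunc ℚ) * RatFunc.X ^ (5 * k)
          - (m : RatFunc ℚ) * RatFunc.X ^ (3 * k) : RatFunc ℚ) : LaurentSeries ℚ)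
        = HahnSeries.single ((5 * k : ℕ) : ℤ) (m : ℚ)
          - HahnSeries.single ((3 * k : ℕ) : ℤ) (m : ℚ) := by
      have hmC : ((m : ℕ) : RatFunc ℚ) = RatFunc.C ((m : ℕ) : ℚ) := (map_natCast (RatFunc.C : ℚ →+* RatFunc ℚ) m).symm
      rw [map_sub, hmC, coe_C_mul_X_pow, coe_C_mul_X_pow]
    have hh : ∑ B ∈ π.parts, HahnSeries.single (e B) (q B)
        = HahnSeries.single ((5 * k : ℕ) : ℤ) (m : ℚ)
          - HahnSeries.single ((3 * k : ℕ) : ℤ) (m : ℚ) := by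
      rw [← hRHS, ← hsum, map_sum]
      exact Finset.sum_congr rfl (fun B _ => by rw [hterm B])
    have key : ∀ n : ℤ, ∑ B ∈ π.parts, (if n = e B then q B else 0)
        = (if n = ((5 * k : ℕ) : ℤ) then (m : ℚ) else 0)
          - (if n = ((3 * k : ℕ) : ℤ) then (m : ℚ) else 0) := by
      intro n
      have h2 := congrArg (fun F : LaurentSeries ℚ => (HahnSeries.coeff.addMonoidHom n) F) hh
      simp only [map_sum, map_sub, HahnSeries.coeff.addMonoidHom_apply,
        HahnSeries.coeff_single] at h2
      refine Eq.trans (Eq.trans (Finset.sum_congr rfl fun B _ => ?_) h2) ?_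
      · by_cases h : n = e B <;> simp [h]
      · by_cases h5' : n = ((5 * k : ℕ) : ℤ) <;> by_cases h3' : n = ((3 * k : ℕ) : ℤ) <;>
          simp [h5', h3']
    -- bounds
    have hbound : ∀ B ∈ π.parts, Sum.inr 0 ∉ B → e B ≤ 4 * k := by
      intro B hB h0
      have hsub := (hN B hB).2
      have h1 : D (N B) ≤ D B := Finset.sum_le_sum_of_subset hsub
      have h2 : D B ≤ 4 * k := by
        rw [hD B, if_neg h0]
        have := hSSle B
        by_cases h1' : Sum.inr 1 ∈ B <;> simp [h1'] <;> omega
      have h3 : (0:ℤ) ≤ (D (B \ N B) : ℤ) := Int.natCast_nonneg _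
      rw [he]
      simp only
      omega
    have hbound2 : ∀ B ∈ π.parts, Sum.inr 0 ∉ B → Sum.inr 1 ∉ B → e B ≤ 2 * k := by
      intro B hB h0 h1'
      have hsub := (hN B hB).2
      have h1 : D (N B) ≤ D B := Finset.sum_le_sum_of_subset hsub
      have h2 : D B ≤ 2 * k := by
        rw [hD B, if_neg h0, if_neg h1']
        have := hSSle B
        omega
      have h3 : (0:ℤ) ≤ (D (B \ N B) : ℤ) := Int.natCast_nonneg _
      rw [he]; simp only; omega
    -- block with exponent 5k
    have h5 := key ((5 * k : ℕ) : ℤ)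
    rw [if_pos rfl, if_neg (by push_cast; omega)] at h5
    have hex5 : ∃ B ∈ π.parts, e B = ((5 * k : ℕ) : ℤ) := by
      by_contra hcon
      push_neg at hcon
      rw [Finset.sum_eq_zero (fun B hB => if_neg (fun h => hcon B hB h.symm))] at h5
      have : (m:ℚ) = 0 := by linarith
      exact hm0.ne' (by exact_mod_cast this)
    obtain ⟨B0, hB0mem, hB0e⟩ := hex5
    have hB0r : Sum.inr 0 ∈ B0 := by
      by_contra h0
      have := hbound B0 hB0mem h0
      rw [hB0e] at this
      push_cast at this
      omega
    have h5single : q B0 = m := by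
      rw [← sub_zero (m : ℚ), ← h5]
      rw [Finset.sum_eq_single_of_mem B0 hB0mem]
      · rw [if_pos hB0e.symm]
      · intro B hB hBne
        rw [if_neg]
        intro hEq
        have h0B : Sum.inr 0 ∈ B := by
          by_contra h0
          have := hbound B hB h0
          rw [← hEq] at this
          push_cast at this
          omega
        exact hBne (π.eq_of_mem_parts hB hB0mem h0B hB0r)
    -- block with exponent 3k
    have h3 := key ((3 * k : ℕ) : ℤ)
    rw [if_neg (by push_cast; omega), if_pos rfl] at h3
    have hex3 : ∃ B ∈ π.parts, e B = ((3 * k : ℕ) : ℤ) := by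
      by_contra hcon
      push_neg at hcon
      rw [Finset.sum_eq_zero (fun B hB => if_neg (fun h => hcon B hB h.symm))] at h3
      have : (m:ℚ) = 0 := by linarith
      exact hm0.ne' (by exact_mod_cast this)
    obtain ⟨B1, hB1mem, hB1e⟩ := hex3
    have hB0ne1 : B0 ≠ B1 := by
      intro h
      rw [h, hB1e] at hB0e
      push_cast at hB0e
      omega
    have hB1r0 : Sum.inr 0 ∉ B1 := fun h =>
      hB0ne1 (π.eq_of_mem_parts hB0mem hB1mem hB0r h)
    have hB1r : Sum.inr 1 ∈ B1 := by
      by_contra h1'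
      have := hbound2 B1 hB1mem hB1r0 h1'
      rw [hB1e] at this
      push_cast at this
      omega
    have hB0r1 : Sum.inr 1 ∉ B0 := fun h =>
      hB0ne1 (π.eq_of_mem_parts hB0mem hB1mem h hB1r)
    have h3single : q B1 = -(m : ℚ) := by
      rw [← zero_sub (m : ℚ), ← h3]
      rw [Finset.sum_eq_single_of_mem B1 hB1mem]
      · rw [if_pos hB1e.symm]
      · intro B hB hBne
        rw [if_neg]
        intro hEq
        have h1B : Sum.inr 1 ∈ B := by
          by_contra h1'
          have h0B : Sum.inr 0 ∉ B := by
            intro h0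
            have : B = B0 := π.eq_of_mem_parts hB hB0mem h0 hB0r
            rw [this, hB0e] at hEq
            push_cast at hEq
            omega
          have := hbound2 B hB h0B h1'
          rw [← hEq] at this
          push_cast at this
          omega
        exact hBne (π.eq_of_mem_parts hB hB1mem h1B hB1r)
    -- exponent structure
    set x0 := (SS (N B0)).card with hx0
    set y0 := (SS (B0 \ N B0)).card with hy0
    set x1 := (SS (N B1)).card with hx1
    set y1 := (SS (B1 \ N B1)).card with hy1
    have hsubN0 := (hN B0 hB0mem).2
    have hsubN1 := (hN B1 hB1mem).2
    have hN0r1 : Sum.inr 1 ∉ N B0 := fun h => hB0r1 (hsubN0 h)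
    have hD0r1 : Sum.inr 1 ∉ B0 \ N B0 := fun h => hB0r1 (Finset.mem_sdiff.1 h).1
    have hN1r0 : Sum.inr 0 ∉ N B1 := fun h => hB1r0 (hsubN1 h)
    have hD1r0 : Sum.inr 0 ∉ B1 \ N B1 := fun h => hB1r0 (Finset.mem_sdiff.1 h).1
    -- x0 = y0 + k
    have hx0eq : x0 = y0 + k ∧ Sum.inr 0 ∈ N B0 := by
      by_cases h0N : Sum.inr 0 ∈ N B0
      · have hD0r0 : Sum.inr 0 ∉ B0 \ N B0 := fun h => (Finset.mem_sdiff.1 h).2 h0N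
        have e1 : D (N B0) = x0 + 4 * k := by
          rw [hD, if_pos h0N, if_neg hN0r1, hx0]; omega
        have e2 : D (B0 \ N B0) = y0 := by
          rw [hD, if_neg hD0r0, if_neg hD0r1, hy0]; omega
        rw [he] at hB0e
        simp only at hB0e
        rw [e1, e2] at hB0e
        push_cast at hB0e
        constructor
        · omega
        · exact h0N
      · exfalso
        have hD0r0 : Sum.inr 0 ∈ B0 \ N B0 := Finset.mem_sdiff.2 ⟨hB0r, h0N⟩
        have e1 : D (N B0) = x0 := by rw [hD, if_neg h0N, if_neg hN0r1, hx0]; omega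
        have e2 : D (B0 \ N B0) = y0 + 4 * k := by
          rw [hD, if_pos hD0r0, if_neg hD0r1, hy0]; omega
        rw [he] at hB0e
        simp only at hB0e
        rw [e1, e2] at hB0e
        have := hSSle (N B0)
        rw [← hx0] at this
        push_cast at hB0e
        omega
    have hx1eq : x1 = y1 + k := by
      by_cases h1N : Sum.inr 1 ∈ N B1
      · have hD1r1 : Sum.inr 1 ∉ B1 \ N B1 := fun h => (Finset.mem_sdiff.1 h).2 h1N
        have e1 : D (N B1) = x1 + 2 * k := by
          rw [hD, if_neg hN1r0, if_pos h1N, hx1]; omega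
        have e2 : D (B1 \ N B1) = y1 := by
          rw [hD, if_neg hD1r0, if_neg hD1r1, hy1]; omega
        rw [he] at hB1e
        simp only at hB1e
        rw [e1, e2] at hB1e
        push_cast at hB1e
        omega
      · exfalso
        have hD1r1 : Sum.inr 1 ∈ B1 \ N B1 := Finset.mem_sdiff.2 ⟨hB1r, h1N⟩
        have e1 : D (N B1) = x1 := by rw [hD, if_neg hN1r0, if_neg h1N, hx1]; omega
        have e2 : D (B1 \ N B1) = y1 + 2 * k := by
          rw [hD, if_neg hD1r0, if_pos hD1r1, hy1]; omega
        rw [he] at hB1e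
        simp only at hB1e
        rw [e1, e2] at hB1e
        have := hSSle (N B1)
        rw [← hx1] at this
        push_cast at hB1e
        omega
    -- disjointness and cardinalities
    have hSSunion : ∀ T T' : Finset (Fin (2*k) ⊕ Fin 2), SS (T ∪ T') = SS T ∪ SS T' := by
      intro T T'
      ext i
      simp [hSS, Finset.mem_union]
    have hSSdisj : ∀ T T' : Finset (Fin (2*k) ⊕ Fin 2), Disjoint T T' →
        Disjoint (SS T) (SS T') := by
      intro T T' hTT
      rw [Finset.disjoint_left] at hTT ⊢
      intro i hi hi'
      simp only [hSS, Finset.mem_filter] at hi hi'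
      exact hTT hi.2 hi'.2
    have hunion0 : x0 + y0 = (SS B0).card := by
      rw [hx0, hy0, ← Finset.card_union_of_disjoint (hSSdisj _ _ Finset.disjoint_sdiff),
        ← hSSunion, Finset.union_sdiff_of_subset hsubN0]
    have hunion1 : x1 + y1 = (SS B1).card := by
      rw [hx1, hy1, ← Finset.card_union_of_disjoint (hSSdisj _ _ Finset.disjoint_sdiff),
        ← hSSunion, Finset.union_sdiff_of_subset hsubN1]
    have hdisj01 : Disjoint B0 B1 := π.disjoint hB0mem hB1mem hB0ne1
    have htotal : x0 + y0 + (x1 + y1) ≤ 2 * k := by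
      rw [hunion0, hunion1, ← Finset.card_union_of_disjoint (hSSdisj _ _ hdisj01)]
      have h1 := Finset.card_le_card (Finset.subset_univ (SS B0 ∪ SS B1))
      simpa using h1
    obtain ⟨hx0y0, h0N⟩ := hx0eq
    have hy00 : y0 = 0 := by omega
    have hx0k : x0 = k := by omega
    -- conclude
    have hPD1 : P (B0 \ N B0) = 1 := by
      rw [hP]
      simp only
      have : SS (B0 \ N B0) = ∅ := Finset.card_eq_zero.1 (by rw [← hy0, hy00])
      rw [this, Finset.prod_empty]
    have hqB0 : (ε B0 : ℚ) * (P (N B0) : ℚ) = m := by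
      have := h5single
      rw [hq] at this
      simp only at this
      rw [hPD1] at this
      push_cast at this
      rw [div_one] at this
      exact this
    have hεB0 : ε B0 = 1 := by
      rcases hε B0 hB0mem with h | h
      · exact h
      · exfalso
        rw [h] at hqB0
        push_cast at hqB0
        have h1 : (0:ℚ) < P (N B0) := by exact_mod_cast hPpos (N B0)
        have h2 : (0:ℚ) < m := by exact_mod_cast hm0
        nlinarith
    rw [hεB0] at hqB0
    push_cast at hqB0
    rw [one_mul] at hqB0
    have hPm : P (N B0) = m := by exact_mod_cast hqB0
    refine ⟨SS (N B0), ?_, ?_⟩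
    · rw [← hx0, hx0k]
    · rw [← hPm, hP]
  · rintro ⟨S, hScard, hSprod⟩
    have hm0 : 0 < m := by
      rcases Nat.eq_zero_or_pos m with h | h
      · exfalso
        have : 0 < ∏ i, a i := Finset.prod_pos (fun i _ => ha i)
        rw [hm, h] at this; simp at this
      · exact h
    have hcompl : ∏ i ∈ Sᶜ, a i = m := by
      have h1 : (∏ i ∈ S, a i) * ∏ i ∈ Sᶜ, a i = m ^ 2 := by
        rw [Finset.prod_mul_prod_compl]; exact hm
      rw [hSprod, sq] at h1
      exact Nat.eq_of_mul_eq_mul_left hm0 h1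
    have hccard : Sᶜ.card = k := by
      have := Finset.card_add_card_compl S
      simp only [Fintype.card_fin] at this
      omega
    set B₁ : Finset (Fin (2 * k) ⊕ Fin 2) := insert (Sum.inr 0) (S.image Sum.inl) with hB₁
    set B₂ : Finset (Fin (2 * k) ⊕ Fin 2) := insert (Sum.inr 1) (Sᶜ.image Sum.inl) with hB₂
    have h0B₁ : Sum.inr 0 ∈ B₁ := mem_insert_self _ _
    have h0B₂ : (Sum.inr 0 : Fin (2*k) ⊕ Fin 2) ∉ B₂ := by simp [hB₂, Fin.ext_iff]
    have hne : B₁ ≠ B₂ := fun h => h0B₂ (h ▸ h0B₁)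
    have hdisj : Disjoint B₁ B₂ := by
      rw [Finset.disjoint_left]
      rintro (i | j) h1 h2
      · simp only [hB₁, hB₂, mem_insert, mem_image] at h1 h2
        rcases h1 with h1 | ⟨x, hx, hxe⟩
        · exact absurd h1 (by simp)
        rcases h2 with h2 | ⟨y, hy, hye⟩
        · exact absurd h2 (by simp)
        cases hxe; cases hye
        simp_all
      · simp only [hB₁, hB₂, mem_insert, mem_image] at h1 h2
        rcases h1 with h1 | ⟨x, hx, hxe⟩
        · rcases h2 with h2 | ⟨y, hy, hye⟩
          · rw [h1] at h2; exact absurd (Sum.inr.inj h2) (by simp [Fin.ext_iff])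
          · exact absurd hye (by simp)
        · exact absurd hxe (by simp)
    have hsup : ({B₁, B₂} : Finset _).sup id = (Finset.univ : Finset (Fin (2 * k) ⊕ Fin 2)) := by
      rw [Finset.sup_insert, Finset.sup_singleton, id, id, Finset.sup_eq_union]
      ext (i | j)
      · simp only [mem_union, hB₁, hB₂, mem_insert, mem_image, mem_univ, iff_true]
        by_cases h : i ∈ S
        · exact Or.inl (Or.inr ⟨i, h, rfl⟩)
        · exact Or.inr (Or.inr ⟨i, by simpa using h, rfl⟩)
      · simp only [mem_union, hB₁, hB₂, mem_insert, mem_image, mem_univ, iff_true]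
        fin_cases j
        · exact Or.inl (Or.inl rfl)
        · exact Or.inr (Or.inl rfl)
    refine ⟨⟨{B₁, B₂}, ?_, hsup, ?_⟩, id, fun B => if Sum.inr 0 ∈ B then 1 else -1, ?_, ?_, ?_, ?_⟩
    · rw [Finset.supIndep_pair hne]
      exact hdisj
    · simp only [mem_insert, mem_singleton, bot_eq_empty]
      push_neg
      constructor
      · intro h; rw [← h] at h0B₁; simp at h0B₁
      · intro h
        have : Sum.inr 1 ∈ B₂ := mem_insert_self _ _
        rw [← h] at this; simp at this
    · intro B hB
      refine ⟨?_, fun x hx => hx⟩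
      simp only [mem_insert, mem_singleton] at hB
      rcases hB with rfl | rfl
      · exact insert_nonempty _ _
      · exact insert_nonempty _ _
    · intro B hB
      by_cases h : Sum.inr 0 ∈ B <;> simp [h]
    · exact ⟨B₁, by simp, if_pos h0B₁⟩
    · rw [Finset.sum_pair hne]
      have hd : ∀ B : Finset (Fin (2*k) ⊕ Fin 2), (B \ id B) = ∅ := by simp
      have hi : (Sum.inr 0 : Fin (2*k) ⊕ Fin 2) ∉ S.image Sum.inl := by simp
      have hi2 : (Sum.inr 1 : Fin (2*k) ⊕ Fin 2) ∉ Sᶜ.image Sum.inl := by simp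
      have hprod : ∀ (T : Finset (Fin (2*k))), ∏ j ∈ T.image Sum.inl, v j
          = ((∏ i ∈ T, a i : ℕ) : RatFunc ℚ) * RatFunc.X ^ T.card := by
        intro T
        rw [Finset.prod_image (fun x _ y _ h => Sum.inl.inj h)]
        simp only [hv1]
        rw [Finset.prod_mul_distrib, Finset.prod_const, Nat.cast_prod]
      rw [hd, hd, Finset.prod_empty, div_one, div_one, id, id,
        Finset.prod_insert hi, Finset.prod_insert hi2, hv2, hv3, hprod, hprod,
        hSprod, hcompl, hScard, hccard]
      simp only [if_pos h0B₁, if_neg h0B₂]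
      have e1 : RatFunc.X ^ (4*k) * ((m : RatFunc ℚ) * RatFunc.X ^ k)
          = (m : RatFunc ℚ) * RatFunc.X ^ (5*k) := by
        rw [mul_comm (RatFunc.X ^ (4*k)), mul_assoc, ← pow_add]
        congr 2
        ring
      have e2 : RatFunc.X ^ (2*k) * ((m : RatFunc ℚ) * RatFunc.X ^ k)
          = (m : RatFunc ℚ) * RatFunc.X ^ (3*k) := by
        rw [mul_comm (RatFunc.X ^ (2*k)), mul_assoc, ← pow_add]
        congr 2
        ring
      rw [e1, e2]
      push_cast
      ring
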